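/- For six quaternions P₁,…,P₆ such that all cyclically consecutive differences are nonzero, the multi-ratio condition M(P₁,P₂,P₃,P₄,P₅,P₆) = −1 holds if and only if the reversed left multi-ratio condition M̃(P₆,P₅,P₄,P₃,P₂,P₁) = −1 holds. -/

import Mathlib

/-- Right multi-ratio of six quaternions. -/
noncomputable def rightMultiRatio (P₁ P₂ P₃ P₄ P₅ P₆ : Quaternion ℝ) : Quaternion ℝ :=
  (P₁ - P₂) * (P₂ - P₃)⁻¹ * (P₃ - P₄) * (P₄ - P₅)⁻¹ * (P₅ - P₆) * (P₆ - P₁)⁻¹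

/-- Left multi-ratio of six quaternions. -/
noncomputable def leftMultiRatio (P₁ P₂ P₃ P₄ P₅ P₆ : Quaternion ℝ) : Quaternion ℝ :=
  (P₁ - P₆)⁻¹ * (P₆ - P₅) * (P₅ - P₄)⁻¹ * (P₄ - P₃) * (P₃ - P₂)⁻¹ * (P₂ - P₁)

theorem multiRatio_cond_iff_reversed_left_multiRatio_cond
    (P₁ P₂ P₃ P₄ P₅ P₆ : Quaternion ℝ)
    (h₁₂ : P₁ - P₂ ≠ 0) (h₂₃ : P₂ - P₃ ≠ 0) (h₃₄ : P₃ - P₄ ≠ 0)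
    (h₄₅ : P₄ - P₅ ≠ 0) (h₅₆ : P₅ - P₆ ≠ 0) (h₆₁ : P₆ - P₁ ≠ 0) :
    rightMultiRatio P₁ P₂ P₃ P₄ P₅ P₆ = -1 ↔
      leftMultiRatio P₆ P₅ P₄ P₃ P₂ P₁ = -1 := by
  unfold rightMultiRatio leftMultiRatio
  have e1 : (P₁ - P₂) * (P₂ - P₃)⁻¹ * (P₃ - P₄) * (P₄ - P₅)⁻¹ * (P₅ - P₆) * (P₆ - P₁)⁻¹
      = ((P₁ - P₂) * (P₂ - P₃)⁻¹ * (P₃ - P₄) * (P₄ - P₅)⁻¹ * (P₅ - P₆)) * (P₆ - P₁)⁻¹ := by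
    simp [mul_assoc]
  have e2 : (P₆ - P₁)⁻¹ * (P₁ - P₂) * (P₂ - P₃)⁻¹ * (P₃ - P₄) * (P₄ - P₅)⁻¹ * (P₅ - P₆)
      = (P₆ - P₁)⁻¹ * ((P₁ - P₂) * (P₂ - P₃)⁻¹ * (P₃ - P₄) * (P₄ - P₅)⁻¹ * (P₅ - P₆)) := by
    simp [mul_assoc]
  rw [e1, e2, mul_inv_eq_iff_eq_mul₀ h₆₁, inv_mul_eq_iff_eq_mul₀ h₆₁]
  constructor <;> intro h <;> rw [h] <;> simp [mul_comm]
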